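/- Suppose E₁ and E₂ are spectral, and suppose there exist f₁ ∈ E₁ that is not a real scalar multiple of u₁ and f₂ ∈ E₂ that is not a real scalar multiple of u₂. Then the direct convex sum E₁ ⊕ E₂, defined as the interval [0,ū] in the quotient ordered vector space W = (V₁ × V₂)/span{(u₁,−u₂)} with positive cone the image of C₁ × C₂ and ū the image of (u₁,0), is not a spectral effect algebra. -/

import Mathlib

variable {V : Type*} [AddCommGroup V] [Module ℝ V]

/-- `P` is a pointed convex cone: closed under addition, nonnegative scalar
multiplication, and `P ∩ (-P) = {0}`. -/
def IsCone (P : Set V) : Prop :=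
  (∀ x ∈ P, ∀ y ∈ P, x + y ∈ P) ∧
  (∀ c : ℝ, 0 ≤ c → ∀ x ∈ P, c • x ∈ P) ∧
  (∀ x ∈ P, -x ∈ P → x = 0)

/-- The order induced by the cone `P`: `v ≤ w` iff `w - v ∈ P`. -/
def leC (P : Set V) (v w : V) : Prop := w - v ∈ P

/-- The linear effect algebra `E = [0, u]`. -/
def Eff (P : Set V) (u : V) : Set V := {v | leC P 0 v ∧ leC P v u}

/-- `f` is a sharp element of `[0, u]`. -/
def Sharp (P : Set V) (u f : V) : Prop :=
  f ∈ Eff P u ∧ ∀ g ∈ Eff P u, leC P g f → leC P g (u - f) → g = 0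

/-- `f` is a one-dimensional element of `[0, u]`. -/
def OneDim (P : Set V) (u f : V) : Prop :=
  f ∈ Eff P u ∧ f ≠ 0 ∧ ∀ g ∈ Eff P u, leC P g f → ∃ t : ℝ, 0 ≤ t ∧ t ≤ 1 ∧ g = t • f

/-- The set of sharp one-dimensional elements of `[0, u]`. -/
def S1 (P : Set V) (u : V) : Set V := {f | Sharp P u f ∧ OneDim P u f}

/-- A context: a finite family of sharp one-dimensional elements summing to `u`. -/
def IsContext (P : Set V) (u : V) {n : ℕ} (a : Fin n → V) : Prop :=
  (∀ i, a i ∈ S1 P u) ∧ ∑ i, a i = u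

/-- The effect algebra `[0, u]` is spectral. -/
def Spectral (P : Set V) (u : V) : Prop :=
  ∀ f ∈ Eff P u, ∃ (n : ℕ) (a : Fin n → V) (μ : Fin n → ℝ),
    IsContext P u a ∧ (∀ i, 0 ≤ μ i ∧ μ i ≤ 1) ∧ f = ∑ i, μ i • a i

/-- A state on `[0, u]`: a positive linear functional with `s u = 1`. -/
def IsState (P : Set V) (u : V) (s : V →ₗ[ℝ] ℝ) : Prop :=
  (∀ p ∈ P, 0 ≤ s p) ∧ s u = 1

lemma cone_zero_mem {P : Set V} (hP : IsCone P) {x : V} (hx : x ∈ P) : (0 : V) ∈ P := by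
  simpa using hP.2.1 0 le_rfl x hx

lemma cone_coeff_nonneg {P : Set V} (hP : IsCone P) {u : V} (hu : u ∈ P) (hun : u ≠ 0)
    {c : ℝ} (h : c • u ∈ P) : 0 ≤ c := by
  by_contra hc
  push_neg at hc
  have h2 : (-c) • u ∈ P := hP.2.1 (-c) (by linarith) u hu
  have h3 : c • u = 0 := hP.2.2 _ h (by rwa [← neg_smul])
  rcases smul_eq_zero.mp h3 with h | h
  · linarith
  · exact hun h

lemma cone_sum_mem {P : Set V} (hP : IsCone P) (h0 : (0 : V) ∈ P) {ι : Type*} (s : Finset ι)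
    (g : ι → V) (h : ∀ i ∈ s, g i ∈ P) : ∑ i ∈ s, g i ∈ P :=
  Finset.sum_induction g (· ∈ P) (fun a b ha hb => hP.1 a ha b hb) h0 h

/-- The direct convex sum of two spectral effect algebras (each containing an
effect that is not a scalar multiple of the unit) is not a spectral effect
algebra. -/
theorem stmt_13 {V₁ V₂ : Type*} [AddCommGroup V₁] [Module ℝ V₁]
    [AddCommGroup V₂] [Module ℝ V₂]
    (C₁ : Set V₁) (C₂ : Set V₂) (h₁ : IsCone C₁) (h₂ : IsCone C₂)
    (u₁ : V₁) (u₂ : V₂) (hu₁ : u₁ ∈ C₁) (hu₂ : u₂ ∈ C₂)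
    (hn₁ : u₁ ≠ 0) (hn₂ : u₂ ≠ 0)
    (hspec₁ : Spectral C₁ u₁) (hspec₂ : Spectral C₂ u₂)
    (f₁ : V₁) (hf₁ : f₁ ∈ Eff C₁ u₁) (hf₁u : ∀ c : ℝ, f₁ ≠ c • u₁)
    (f₂ : V₂) (hf₂ : f₂ ∈ Eff C₂ u₂) (hf₂u : ∀ c : ℝ, f₂ ≠ c • u₂)
    (S : Submodule ℝ (V₁ × V₂)) (hS : S = Submodule.span ℝ {(u₁, -u₂)})
    (C : Set ((V₁ × V₂) ⧸ S)) (hC : C = S.mkQ '' (C₁ ×ˢ C₂)) :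
    ¬ Spectral C (S.mkQ (u₁, 0)) := by
  have h0₁ : (0 : V₁) ∈ C₁ := cone_zero_mem h₁ hu₁
  have h0₂ : (0 : V₂) ∈ C₂ := cone_zero_mem h₂ hu₂
  have hCmem : ∀ p : V₁ × V₂, p.1 ∈ C₁ → p.2 ∈ C₂ → S.mkQ p ∈ C := by
    intro p hp1 hp2
    rw [hC]
    exact ⟨p, ⟨hp1, hp2⟩, rfl⟩
  have hCmem' : ∀ z ∈ C, ∃ p : V₁ × V₂, p.1 ∈ C₁ ∧ p.2 ∈ C₂ ∧ S.mkQ p = z := by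
    intro z hz
    rw [hC] at hz
    obtain ⟨p, hp, hpz⟩ := hz
    exact ⟨p, hp.1, hp.2, hpz⟩
  have hCadd : ∀ z ∈ C, ∀ w ∈ C, z + w ∈ C := by
    intro z hz w hw
    obtain ⟨p, hp1, hp2, rfl⟩ := hCmem' z hz
    obtain ⟨q, hq1, hq2, rfl⟩ := hCmem' w hw
    rw [← map_add]
    exact hCmem _ (h₁.1 _ hp1 _ hq1) (h₂.1 _ hp2 _ hq2)
  have hQeq : ∀ p q : V₁ × V₂, S.mkQ p = S.mkQ q ↔ ∃ c : ℝ, p - q = c • (u₁, -u₂) := by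
    intro p q
    rw [Submodule.mkQ_apply, Submodule.mkQ_apply, Submodule.Quotient.eq, hS,
      Submodule.mem_span_singleton]
    exact ⟨fun ⟨c, hc⟩ => ⟨c, hc.symm⟩, fun ⟨c, hc⟩ => ⟨c, hc.symm⟩⟩
  -- coefficient extraction lemmas
  have hcu₁ : ∀ c : ℝ, c • u₁ = 0 → c = 0 := by
    intro c hc
    rcases smul_eq_zero.mp hc with h | h
    · exact h
    · exact absurd h hn₁
  have hcu₂ : ∀ c : ℝ, c • u₂ = 0 → c = 0 := by
    intro c hc
    rcases smul_eq_zero.mp hc with h | h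
    · exact h
    · exact absurd h hn₂
  -- Step 1: dichotomy for sharp one-dimensional elements
  have hdich : ∀ b ∈ S1 C (S.mkQ (u₁, 0)),
      (∃ x, x ∈ C₁ ∧ b = S.mkQ (x, 0)) ∨ (∃ y, y ∈ C₂ ∧ b = S.mkQ (0, y)) := by
    intro b hb
    obtain ⟨hbs, hbo⟩ := hb
    have hbC : b ∈ C := by
      have := hbo.1.1
      rwa [leC, sub_zero] at this
    obtain ⟨p, hp1, hp2, hpb⟩ := hCmem' b hbC
    have hga : leC C (S.mkQ (p.1, 0)) b := by
      rw [leC, ← hpb, ← map_sub]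
      have hpp : p - (p.1, (0 : V₂)) = ((0 : V₁), p.2) := by
        ext <;> simp
      rw [hpp]
      exact hCmem _ h0₁ hp2
    have hgeff : S.mkQ (p.1, 0) ∈ Eff C (S.mkQ (u₁, 0)) := by
      constructor
      · rw [leC, sub_zero]
        exact hCmem _ hp1 h0₂
      · rw [leC]
        have hsplit : S.mkQ (u₁, 0) - S.mkQ (p.1, 0)
            = (S.mkQ (u₁, 0) - b) + (b - S.mkQ (p.1, 0)) := by abel
        rw [hsplit]
        exact hCadd _ hbo.1.2 _ hga
    obtain ⟨τ, hτ0, hτ1, hgτ⟩ := hbo.2.2 _ hgeff hga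
    have heq : S.mkQ (p.1, 0) = S.mkQ (τ • p) := by
      rw [map_smul, hpb]
      exact hgτ
    obtain ⟨c, hc⟩ := (hQeq _ _).mp heq
    have hc1 : p.1 - τ • p.1 = c • u₁ := by
      have := congrArg Prod.fst hc
      simpa using this
    have hc2 : τ • p.2 = c • u₂ := by
      have := congrArg Prod.snd hc
      simp only [Prod.snd_sub, Prod.smul_snd, Prod.mk_sub_mk, smul_neg, Prod.snd_zero] at this
      have h' : -(τ • p.2) = -(c • u₂) := by
        simpa [sub_eq_add_neg] using this
      exact neg_injective h'
    rcases lt_or_eq_of_le hτ1 with hτ | hτ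
    · -- τ < 1 : b is of the second form (or degenerate)
      have h1τ : (0 : ℝ) < 1 - τ := by linarith
      have hfst : (1 - τ) • p.1 = c • u₁ := by
        rw [sub_smul, one_smul]
        exact hc1
      have hcC : c • u₁ ∈ C₁ := hfst ▸ h₁.2.1 _ h1τ.le _ hp1
      have hc0 : 0 ≤ c := cone_coeff_nonneg h₁ hu₁ hn₁ hcC
      have hr0 : 0 ≤ (1 - τ)⁻¹ * c := mul_nonneg (inv_nonneg.mpr h1τ.le) hc0
      have hp1r : p.1 = ((1 - τ)⁻¹ * c) • u₁ := by
        have h' := congrArg (fun v => (1 - τ)⁻¹ • v) hfst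
        simpa [smul_smul, inv_mul_cancel₀ h1τ.ne'] using h'
      right
      refine ⟨p.2 + ((1 - τ)⁻¹ * c) • u₂, h₂.1 _ hp2 _ (h₂.2.1 _ hr0 _ hu₂), ?_⟩
      rw [← hpb]
      refine (hQeq _ _).mpr ⟨(1 - τ)⁻¹ * c, ?_⟩
      have : p = (p.1, p.2) := rfl
      rw [this, hp1r]
      ext <;> simp
    · -- τ = 1 : b is of the first form
      have hc0 : c = 0 := by
        apply hcu₁
        rw [← hc1, hτ, one_smul, sub_self]
      have hp2z : p.2 = 0 := by
        have : p.2 = c • u₂ := by rw [← hc2, hτ, one_smul]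
        rw [this, hc0, zero_smul]
      left
      refine ⟨p.1, hp1, ?_⟩
      rw [← hpb]
      congr 1
      exact Prod.ext rfl hp2z
  -- Step 2: assume spectrality and derive a contradiction
  intro hspec
  have hf₁C : f₁ ∈ C₁ := by have := hf₁.1; rwa [leC, sub_zero] at this
  have hf₂C : f₂ ∈ C₂ := by have := hf₂.1; rwa [leC, sub_zero] at this
  have hf₁u' : u₁ - f₁ ∈ C₁ := hf₁.2
  have hf₂u' : u₂ - f₂ ∈ C₂ := hf₂.2
  have hfEff : S.mkQ ((2 : ℝ)⁻¹ • f₁, (2 : ℝ)⁻¹ • f₂) ∈ Eff C (S.mkQ (u₁, 0)) := by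
    constructor
    · rw [leC, sub_zero]
      exact hCmem _ (h₁.2.1 _ (by norm_num) _ hf₁C) (h₂.2.1 _ (by norm_num) _ hf₂C)
    · rw [leC, ← map_sub]
      have key : S.mkQ ((u₁, (0:V₂)) - ((2 : ℝ)⁻¹ • f₁, (2 : ℝ)⁻¹ • f₂))
          = S.mkQ ((2 : ℝ)⁻¹ • (u₁ - f₁), (2 : ℝ)⁻¹ • (u₂ - f₂)) := by
        refine (hQeq _ _).mpr ⟨(2 : ℝ)⁻¹, ?_⟩
        ext
        · simp [smul_sub]
          module
        · simp [smul_sub]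
          module
      rw [key]
      exact hCmem _ (h₁.2.1 _ (by norm_num) _ hf₁u') (h₂.2.1 _ (by norm_num) _ hf₂u')
  obtain ⟨n, a, μ, ⟨hctx, hsum⟩, hμ, hfd⟩ := hspec _ hfEff
  have hrep : ∀ i, ∃ p : V₁ × V₂,
      p.1 ∈ C₁ ∧ p.2 ∈ C₂ ∧ a i = S.mkQ p ∧ (p.1 = 0 ∨ p.2 = 0) := by
    intro i
    rcases hdich (a i) (hctx i) with ⟨x, hx, hax⟩ | ⟨y, hy, hay⟩
    · exact ⟨(x, 0), hx, h0₂, hax, Or.inr rfl⟩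
    · exact ⟨(0, y), h0₁, hy, hay, Or.inl rfl⟩
  choose w hw1 hw2 hw3 hw4 using hrep
  have hfd' : S.mkQ ((2 : ℝ)⁻¹ • f₁, (2 : ℝ)⁻¹ • f₂) = S.mkQ (∑ i, μ i • w i) := by
    rw [map_sum, hfd]
    congr 1
    funext i
    rw [hw3, map_smul]
  obtain ⟨d, hd⟩ := (hQeq _ _).mp hfd'
  by_cases hA : ∀ i, (w i).2 = 0
  · -- all context elements live in the first component : f₂ is a multiple of u₂
    have hsnd : (2 : ℝ)⁻¹ • f₂ = (-d) • u₂ := by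
      have h' := congrArg Prod.snd hd
      simp only [Prod.snd_sub, Prod.snd_sum, Prod.smul_snd, Prod.mk.injEq, smul_neg] at h'
      have hz : ∑ x, μ x • (w x).2 = 0 := by
        apply Finset.sum_eq_zero
        intro x _
        rw [hA x, smul_zero]
      rw [hz, sub_zero] at h'
      rw [neg_smul]
      exact h'
    apply hf₂u (2 * (-d))
    have := congrArg (fun v => (2 : ℝ) • v) hsnd
    simpa [smul_smul] using this
  by_cases hB : ∀ i, (w i).1 = 0
  · -- all context elements live in the second component : f₁ is a multiple of u₁
    have hfst : (2 : ℝ)⁻¹ • f₁ = d • u₁ := by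
      have h' := congrArg Prod.fst hd
      simp only [Prod.fst_sub, Prod.fst_sum, Prod.smul_fst] at h'
      have hz : ∑ x, μ x • (w x).1 = 0 := by
        apply Finset.sum_eq_zero
        intro x _
        rw [hB x, smul_zero]
      rw [hz, sub_zero] at h'
      exact h'
    apply hf₁u (2 * d)
    have := congrArg (fun v => (2 : ℝ) • v) hfst
    simpa [smul_smul] using this
  -- mixed case : contradiction with sharpness
  push_neg at hA hB
  obtain ⟨i, hi⟩ := hA
  obtain ⟨j, hj⟩ := hB
  have hwj2 : (w j).2 = 0 := (hw4 j).resolve_left hj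
  -- the total sum
  have hsum' : S.mkQ (∑ k, w k) = S.mkQ (u₁, 0) := by
    rw [map_sum]
    simp_rw [← hw3]
    exact hsum
  obtain ⟨c, hc⟩ := (hQeq _ _).mp hsum'
  have hS1 : ∑ k, (w k).1 = (1 + c) • u₁ := by
    have h' := congrArg Prod.fst hc
    simp only [Prod.fst_sub, Prod.fst_sum, Prod.smul_fst] at h'
    have : ∑ k, (w k).1 - u₁ = c • u₁ := h'
    rw [add_smul, one_smul]
    linear_combination (norm := module) this
  have hS2 : ∑ k, (w k).2 = (-c) • u₂ := by
    have h' := congrArg Prod.snd hc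
    simp only [Prod.snd_sub, Prod.snd_sum, Prod.smul_snd, smul_neg] at h'
    have : ∑ k, (w k).2 - 0 = -(c • u₂) := h'
    rw [neg_smul]
    linear_combination (norm := module) this
  -- x := (w j).1, y := (w i).2
  have hxle : (1 + c) • u₁ - (w j).1 ∈ C₁ := by
    have hsplit : (w j).1 + ∑ k ∈ Finset.univ.erase j, (w k).1 = ∑ k, (w k).1 :=
      Finset.add_sum_erase Finset.univ (fun k => (w k).1) (Finset.mem_univ j)
    have : (1 + c) • u₁ - (w j).1 = ∑ k ∈ Finset.univ.erase j, (w k).1 := by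
      rw [← hS1, ← hsplit]
      abel
    rw [this]
    exact cone_sum_mem h₁ h0₁ _ _ (fun k _ => hw1 k)
  have hyle : (-c) • u₂ - (w i).2 ∈ C₂ := by
    have hsplit : (w i).2 + ∑ k ∈ Finset.univ.erase i, (w k).2 = ∑ k, (w k).2 :=
      Finset.add_sum_erase Finset.univ (fun k => (w k).2) (Finset.mem_univ i)
    have : (-c) • u₂ - (w i).2 = ∑ k ∈ Finset.univ.erase i, (w k).2 := by
      rw [← hS2, ← hsplit]
      abel
    rw [this]
    exact cone_sum_mem h₂ h0₂ _ _ (fun k _ => hw2 k)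
  have hc1pos : 0 ≤ 1 + c := by
    apply cone_coeff_nonneg h₁ hu₁ hn₁
    rw [← hS1]
    exact cone_sum_mem h₁ h0₁ _ _ (fun k _ => hw1 k)
  have hcneg : 0 ≤ -c := by
    apply cone_coeff_nonneg h₂ hu₂ hn₂
    rw [← hS2]
    exact cone_sum_mem h₂ h0₂ _ _ (fun k _ => hw2 k)
  have hcneg' : 0 < -c := by
    rcases hcneg.lt_or_eq with h | h
    · exact h
    · exfalso
      apply hi
      apply h₂.2.2 _ (hw2 i)
      have : -(w i).2 = (-c) • u₂ - (w i).2 := by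
        rw [← h, zero_smul, zero_sub]
      rw [← this] at hyle
      exact hyle
  have hc1pos' : 0 < 1 + c := by
    rcases hc1pos.lt_or_eq with h | h
    · exact h
    · exfalso
      apply hj
      apply h₁.2.2 _ (hw1 j)
      have : -(w j).1 = (1 + c) • u₁ - (w j).1 := by
        rw [← h, zero_smul, zero_sub]
      rw [← this] at hxle
      exact hxle
  -- the small effect ε • x below both a j and its complement
  set ε : ℝ := min 1 ((-c) / (1 + c)) with hε
  have hε0 : 0 < ε := lt_min one_pos (div_pos hcneg' hc1pos')
  have hε1 : ε ≤ 1 := min_le_left _ _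
  have hεkey : (1 + ε) * (1 + c) ≤ 1 := by
    have h' : ε ≤ (-c) / (1 + c) := min_le_right _ _
    have h'' : ε * (1 + c) ≤ -c := (le_div_iff₀ hc1pos').mp h'
    nlinarith
  have hajEff : a j ∈ Eff C (S.mkQ (u₁, 0)) := (hctx j).1.1
  have hwjC : w j = ((w j).1, (0 : V₂)) := Prod.ext rfl hwj2
  have hgEff : S.mkQ (ε • (w j).1, 0) ∈ Eff C (S.mkQ (u₁, 0)) := by
    constructor
    · rw [leC, sub_zero]
      exact hCmem _ (h₁.2.1 _ hε0.le _ (hw1 j)) h0₂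
    · rw [leC]
      have hsplit : S.mkQ (u₁, 0) - S.mkQ (ε • (w j).1, 0)
          = (S.mkQ (u₁, 0) - a j) + (a j - S.mkQ (ε • (w j).1, 0)) := by abel
      rw [hsplit]
      apply hCadd _ hajEff.2
      rw [hw3 j, hwjC, ← map_sub]
      have : ((w j).1, (0 : V₂)) - (ε • (w j).1, (0 : V₂)) = ((1 - ε) • (w j).1, (0 : V₂)) := by
        ext
        · simp [sub_smul]
        · simp
      rw [this]
      exact hCmem _ (h₁.2.1 _ (by linarith) _ (hw1 j)) h0₂
  have hgaj : leC C (S.mkQ (ε • (w j).1, 0)) (a j) := by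
    rw [leC, hw3 j, hwjC, ← map_sub]
    have : ((w j).1, (0 : V₂)) - (ε • (w j).1, (0 : V₂)) = ((1 - ε) • (w j).1, (0 : V₂)) := by
      ext
      · simp [sub_smul]
      · simp
    rw [this]
    exact hCmem _ (h₁.2.1 _ (by linarith) _ (hw1 j)) h0₂
  have hgcomp : leC C (S.mkQ (ε • (w j).1, 0)) (S.mkQ (u₁, 0) - a j) := by
    rw [leC, hw3 j, hwjC, ← map_sub, ← map_sub]
    have key : S.mkQ ((u₁, (0:V₂)) - ((w j).1, (0:V₂)) - (ε • (w j).1, (0:V₂)))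
        = S.mkQ ((1 + ε) • ((1 + c) • u₁ - (w j).1), (1 - (1 + ε) * (1 + c)) • u₂) := by
      refine (hQeq _ _).mpr ⟨1 - (1 + ε) * (1 + c), ?_⟩
      ext
      · simp only [Prod.fst_sub, Prod.smul_fst, Prod.mk_sub_mk]
        module
      · simp only [Prod.snd_sub, Prod.smul_snd, Prod.mk_sub_mk]
        module
    rw [key]
    exact hCmem _ (h₁.2.1 _ (by linarith) _ hxle) (h₂.2.1 _ (by linarith [hεkey]) _ hu₂)
  have hg0 : S.mkQ (ε • (w j).1, 0) = 0 := (hctx j).1.2 _ hgEff hgaj hgcomp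
  have : S.mkQ ((ε • (w j).1, (0:V₂))) = S.mkQ (0, 0) := by
    rw [hg0]
    simp
    exact (Submodule.Quotient.mk_zero S).symm
  obtain ⟨e, he⟩ := (hQeq _ _).mp this
  have he2 : (0 : V₂) = e • (-u₂) := by
    have := congrArg Prod.snd he
    simpa using this
  have he0 : e = 0 := by
    apply hcu₂
    have : e • u₂ = 0 := by
      rw [eq_comm, smul_neg] at he2
      exact neg_eq_zero.mp he2
    exact this
  have he1 : ε • (w j).1 = 0 := by
    have := congrArg Prod.fst he
    simp only [Prod.fst_sub, Prod.smul_fst, Prod.mk_sub_mk, sub_zero] at this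
    rw [he0, zero_smul] at this
    simpa using this
  exact hj (by
    rcases smul_eq_zero.mp he1 with h | h
    · exact absurd h hε0.ne'
    · exact h)
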